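/- Let 0 < m < ℓ ≤ d and let E ⊆ F ⊆ ℝ^d. If F is ℓ-regular and E is m-regular, then E is porous in F. -/

import Mathlib

open MeasureTheory Metric

/-- Cardinality bound for a separated finset via a measure. -/
lemma sep_card_bound {X : Type*} [MetricSpace X] [MeasurableSpace X] [OpensMeasurableSpace X]
    (μ : Measure X) (A B : Set X) (δ : ℝ)
    (c M : ENNReal) (s : Finset X) (hB : MeasurableSet B)
    (hsep : (s : Set X).Pairwise (fun p q => 2 * δ ≤ dist p q))
    (hsub : ∀ p ∈ s, ball p δ ⊆ B)
    (hc : ∀ p ∈ s, c ≤ μ (ball p δ ∩ A))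
    (hM : μ (B ∩ A) ≤ M) : s.card • c ≤ M := by
  have hdisj : (s : Set X).PairwiseDisjoint (fun p => ball p δ) := by
    intro p hp q hq hpq
    exact ball_disjoint_ball (by have := hsep hp hq hpq; linarith)
  calc s.card • c ≤ ∑ p ∈ s, μ (ball p δ ∩ A) := Finset.card_nsmul_le_sum _ _ _ hc
    _ = ∑ p ∈ s, (μ.restrict A) (ball p δ) := by
        refine Finset.sum_congr rfl fun p _ => ?_
        rw [Measure.restrict_apply measurableSet_ball]
    _ = (μ.restrict A) (⋃ p ∈ s, ball p δ) :=
        (measure_biUnion_finset hdisj fun p _ => measurableSet_ball).symm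
    _ ≤ (μ.restrict A) B := measure_mono (Set.iUnion₂_subset hsub)
    _ = μ (B ∩ A) := Measure.restrict_apply hB
    _ ≤ M := hM

/-- Maximal `δ`-separated subset exists and is a `δ`-net. -/
lemma exists_maximal_sep {X : Type*} [MetricSpace X] (T : Set X) (δ : ℝ) (hδ : 0 < δ) :
    ∃ S ⊆ T, S.Pairwise (fun p q => δ ≤ dist p q) ∧ ∀ t ∈ T, ∃ p ∈ S, dist t p < δ := by
  have hzorn : ∀ c ⊆ {S | S ⊆ T ∧ S.Pairwise (fun p q => δ ≤ dist p q)},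
      IsChain (· ⊆ ·) c → ∃ ub ∈ {S | S ⊆ T ∧ S.Pairwise (fun p q => δ ≤ dist p q)},
        ∀ s ∈ c, s ⊆ ub := by
    intro c hc hchain
    refine ⟨⋃₀ c, ⟨?_, ?_⟩, fun s hs => Set.subset_sUnion_of_mem hs⟩
    · exact Set.sUnion_subset fun s hs => (hc hs).1
    · intro p hp q hq hpq
      obtain ⟨s, hs, hps⟩ := hp
      obtain ⟨u, hu, hqu⟩ := hq
      rcases hchain.total hs hu with h | h
      · exact (hc hu).2 (h hps) hqu hpq
      · exact (hc hs).2 hps (h hqu) hpq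
  obtain ⟨S, hS⟩ := zorn_subset _ hzorn
  · obtain ⟨hST, hSsep⟩ := hS.prop
    refine ⟨S, hST, hSsep, fun t ht => ?_⟩
    by_contra h
    push_neg at h
    by_cases htS : t ∈ S
    · have := h t htS; rw [dist_self] at this; linarith
    · have : insert t S ∈ {S | S ⊆ T ∧ S.Pairwise (fun p q => δ ≤ dist p q)} := by
        refine ⟨Set.insert_subset ht hST, ?_⟩
        exact Set.Pairwise.insert hSsep fun p hp hpt => ⟨h p hp, dist_comm p t ▸ h p hp⟩
      exact htS (hS.2 this (Set.subset_insert t S) (Set.mem_insert t S))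

lemma ofReal_nsmul_le {n : ℕ} {a b : ℝ} (hb : 0 ≤ b)
    (h : n • ENNReal.ofReal a ≤ ENNReal.ofReal b) : (n : ℝ) * a ≤ b := by
  rw [nsmul_eq_mul, ← ENNReal.ofReal_natCast, ← ENNReal.ofReal_mul (Nat.cast_nonneg n)] at h
  exact (ENNReal.ofReal_le_ofReal_iff hb).1 h

lemma le_ofReal_nsmul {n : ℕ} {a b : ℝ} (hb : 0 ≤ n * b)
    (h : ENNReal.ofReal a ≤ n • ENNReal.ofReal b) : a ≤ (n : ℝ) * b := by
  rw [nsmul_eq_mul, ← ENNReal.ofReal_natCast, ← ENNReal.ofReal_mul (Nat.cast_nonneg n)] at h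
  exact (ENNReal.ofReal_le_ofReal_iff hb).1 h

set_option maxHeartbeats 1000000 in
/-- If `F` is `ℓ`-regular and `E ⊆ F` is `m`-regular with `m < ℓ`, then `E` is
porous in `F`. -/
theorem lower_dimensional_implies_porous (d : ℕ) (m ℓ : ℝ)
    (hm0 : 0 < m) (hmℓ : m < ℓ) (hℓd : ℓ ≤ d)
    (E F : Set (EuclideanSpace ℝ (Fin d))) (hEF : E ⊆ F)
    (aF bF : ℝ) (haF : 0 < aF) (habF : aF ≤ bF)
    (hFreg : ∀ x ∈ F, ∀ r : ℝ, 0 < r → r ≤ 1 →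
      ENNReal.ofReal (aF * r ^ ℓ) ≤ μH[ℓ] (ball x r ∩ F) ∧
      μH[ℓ] (ball x r ∩ F) ≤ ENNReal.ofReal (bF * r ^ ℓ))
    (aE bE : ℝ) (haE : 0 < aE) (habE : aE ≤ bE)
    (hEreg : ∀ x ∈ E, ∀ r : ℝ, 0 < r → r ≤ 1 →
      ENNReal.ofReal (aE * r ^ m) ≤ μH[m] (ball x r ∩ E) ∧
      μH[m] (ball x r ∩ E) ≤ ENNReal.ofReal (bE * r ^ m)) :
    ∃ κ : ℝ, 0 < κ ∧ κ ≤ 1 ∧ ∀ x ∈ E, ∀ r : ℝ, 0 < r → r ≤ 1 →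
      ∃ y ∈ ball x r ∩ F, ball y (κ * r) ∩ E = ∅ := by
  have hbE : 0 < bE := lt_of_lt_of_le haE habE
  have hbF : 0 < bF := lt_of_lt_of_le haF habF
  set A : ℝ := (1/6 : ℝ) ^ ℓ with hA
  set B3 : ℝ := (3 : ℝ) ^ ℓ with hB3
  have hApos : 0 < A := Real.rpow_pos_of_pos (by norm_num) ℓ
  have hB3pos : 0 < B3 := Real.rpow_pos_of_pos (by norm_num) ℓ
  set t : ℝ := min 1 (aE * aF * A / (2 * (bE * bF * B3))) with ht
  have ht0 : 0 < t := lt_min one_pos (by positivity)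
  have ht1 : t ≤ 1 := min_le_left _ _
  have hlm : 0 < ℓ - m := sub_pos.2 hmℓ
  set κ0 : ℝ := t ^ (1 / (ℓ - m)) with hκ0
  have hκ0pos : 0 < κ0 := Real.rpow_pos_of_pos ht0 _
  set κ : ℝ := min (1/6) κ0 with hκ
  have hκpos : 0 < κ := lt_min (by norm_num) hκ0pos
  have hκ6 : κ ≤ 1/6 := min_le_left _ _
  have hkd : κ ^ (ℓ - m) ≤ aE * aF * A / (2 * (bE * bF * B3)) := by
    calc κ ^ (ℓ - m) ≤ κ0 ^ (ℓ - m) :=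
          Real.rpow_le_rpow hκpos.le (min_le_right _ _) hlm.le
      _ = t := by
          rw [hκ0]
          rw [← Real.rpow_mul ht0.le, one_div_mul_cancel hlm.ne', Real.rpow_one]
      _ ≤ _ := min_le_right _ _
  refine ⟨κ, hκpos, by linarith, fun x hxE r hr0 hr1 => ?_⟩
  by_contra hcon
  push_neg at hcon
  set δ : ℝ := κ * r with hδdef
  have hδ0 : 0 < δ := mul_pos hκpos hr0
  have hδ6 : δ ≤ r / 6 := by
    rw [hδdef]; nlinarith
  have hδ1 : δ ≤ 1 := by linarith
  -- maximal separated set in T = E ∩ ball x (r/3)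
  obtain ⟨S, hST, hSsep, hSnet⟩ :=
    exists_maximal_sep (E ∩ ball x (r/3)) (2 * δ) (by linarith)
  -- cardinality bound for finite subsets of S
  have key : ∀ s : Finset (EuclideanSpace ℝ (Fin d)), ↑s ⊆ S →
      (s.card : ℝ) * (aE * δ ^ m) ≤ bE * r ^ m := by
    intro s hs
    refine ofReal_nsmul_le (by positivity) ?_
    refine sep_card_bound μH[m] E (ball x r) δ _ _ s measurableSet_ball
      (hSsep.mono hs) (fun p hp => ?_) (fun p hp => ?_)
      (hEreg x hxE r hr0 hr1).2
    · have hpT := hST (hs hp)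
      have hpx : dist p x < r / 3 := mem_ball.1 hpT.2
      exact ball_subset_ball' (by linarith)
    · exact (hEreg p (hST (hs hp)).1 δ hδ0 hδ1).1
  -- S is finite
  have hfin : S.Finite := by
    by_contra hinf
    have hinf2 : S.Infinite := hinf
    obtain ⟨s, hsS, hcard⟩ :=
      hinf2.exists_subset_card_eq (⌈bE * r ^ m / (aE * δ ^ m)⌉₊ + 1)
    have h1 := key s hsS
    have hpos : 0 < aE * δ ^ m := by positivity
    have h2 : (s.card : ℝ) ≤ bE * r ^ m / (aE * δ ^ m) := by
      rw [le_div_iff₀ hpos]; exact h1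
    have h3 := Nat.le_ceil (bE * r ^ m / (aE * δ ^ m))
    rw [hcard] at h2
    push_cast at h2
    linarith
  set S' := hfin.toFinset with hS'
  -- covering of F ∩ ball x (r/6) by balls around S'
  have hcover : ball x (r/6) ∩ F ⊆ ⋃ p ∈ S', (ball p (3 * δ) ∩ F) := by
    rintro y ⟨hyb, hyF⟩
    have hyx : dist y x < r / 6 := mem_ball.1 hyb
    have hy' : y ∈ ball x r ∩ F := ⟨mem_ball.2 (by linarith), hyF⟩
    obtain ⟨e, heb, heE⟩ := hcon y hy'
    have hey : dist e y < δ := mem_ball.1 heb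
    have heT : e ∈ E ∩ ball x (r/3) := by
      refine ⟨heE, mem_ball.2 ?_⟩
      calc dist e x ≤ dist e y + dist y x := dist_triangle e y x
        _ < δ + r / 6 := by linarith
        _ ≤ r / 3 := by linarith
    obtain ⟨p, hpS, hep⟩ := hSnet e heT
    refine Set.mem_biUnion (hfin.mem_toFinset.2 hpS) ⟨mem_ball.2 ?_, hyF⟩
    calc dist y p ≤ dist y e + dist e p := dist_triangle y e p
      _ < δ + 2 * δ := by rw [dist_comm] at hey; linarith
      _ = 3 * δ := by ring
  -- measure comparison
  have h3δ0 : 0 < 3 * δ := by linarith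
  have h3δ1 : 3 * δ ≤ 1 := by linarith
  have hup : ENNReal.ofReal (aF * (r/6) ^ ℓ) ≤ S'.card • ENNReal.ofReal (bF * (3*δ) ^ ℓ) := by
    calc ENNReal.ofReal (aF * (r/6) ^ ℓ)
        ≤ μH[ℓ] (ball x (r/6) ∩ F) :=
          (hFreg x (hEF hxE) (r/6) (by linarith) (by linarith)).1
      _ ≤ μH[ℓ] (⋃ p ∈ S', (ball p (3*δ) ∩ F)) := measure_mono hcover
      _ ≤ ∑ p ∈ S', μH[ℓ] (ball p (3*δ) ∩ F) := measure_biUnion_finset_le _ _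
      _ ≤ S'.card • ENNReal.ofReal (bF * (3*δ) ^ ℓ) := by
          refine Finset.sum_le_card_nsmul _ _ _ fun p hp => ?_
          have hpE : p ∈ E := (hST (hfin.mem_toFinset.1 hp)).1
          exact (hFreg p (hEF hpE) (3*δ) h3δ0 h3δ1).2
  have h1 : aF * (r/6) ^ ℓ ≤ (S'.card : ℝ) * (bF * (3*δ) ^ ℓ) :=
    le_ofReal_nsmul (mul_nonneg (Nat.cast_nonneg _) (by positivity)) hup
  have h2 : (S'.card : ℝ) * (aE * δ ^ m) ≤ bE * r ^ m := by
    refine key S' ?_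
    rw [hS', Set.Finite.coe_toFinset]
  -- real arithmetic
  set n : ℝ := (S'.card : ℝ) with hn
  have hn0 : 0 ≤ n := Nat.cast_nonneg _
  have hrℓ : 0 < r ^ ℓ := Real.rpow_pos_of_pos hr0 ℓ
  have hrm : 0 < r ^ m := Real.rpow_pos_of_pos hr0 m
  have hkm : 0 < κ ^ m := Real.rpow_pos_of_pos hκpos m
  have hkdpos : 0 < κ ^ (ℓ - m) := Real.rpow_pos_of_pos hκpos _
  have e1 : (r/6) ^ ℓ = A * r ^ ℓ := by
    rw [show r/6 = (1/6) * r by ring, Real.mul_rpow (by norm_num) hr0.le]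
  have e2 : (3*δ) ^ ℓ = B3 * (κ ^ m * κ ^ (ℓ - m)) * r ^ ℓ := by
    rw [hδdef, show (3:ℝ) * (κ * r) = 3 * κ * r by ring,
      Real.mul_rpow (by positivity) hr0.le,
      Real.mul_rpow (by norm_num) hκpos.le,
      ← Real.rpow_add hκpos]
    ring_nf
    rw [hB3]; ring
  have e3 : δ ^ m = κ ^ m * r ^ m := by
    rw [hδdef, Real.mul_rpow hκpos.le hr0.le]
  rw [e1] at h1
  rw [e2] at h1
  rw [e3] at h2
  have hd1 : aF * A ≤ n * (bF * B3 * κ ^ m * κ ^ (ℓ - m)) := by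
    refine le_of_mul_le_mul_right ?_ hrℓ
    calc aF * A * r ^ ℓ = aF * (A * r ^ ℓ) := by ring
      _ ≤ n * (bF * (B3 * (κ ^ m * κ ^ (ℓ - m)) * r ^ ℓ)) := h1
      _ = n * (bF * B3 * κ ^ m * κ ^ (ℓ - m)) * r ^ ℓ := by ring
  have hd2 : n * (aE * κ ^ m) ≤ bE := by
    refine le_of_mul_le_mul_right ?_ hrm
    calc n * (aE * κ ^ m) * r ^ m = n * (aE * (κ ^ m * r ^ m)) := by ring
      _ ≤ bE * r ^ m := h2
  have hmul : n * (aE * κ ^ m) * (bF * B3 * κ ^ (ℓ - m)) ≤ bE * (bF * B3 * κ ^ (ℓ - m)) :=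
    mul_le_mul_of_nonneg_right hd2 (by positivity)
  have hd3 : aF * A * aE ≤ bE * bF * B3 * κ ^ (ℓ - m) := by
    have h6 := mul_le_mul_of_nonneg_right hd1 haE.le
    linarith [h6, hmul]
  have hfin2 : bE * bF * B3 * κ ^ (ℓ - m) ≤ aE * aF * A / 2 := by
    have h4 := mul_le_mul_of_nonneg_left hkd (by positivity : (0:ℝ) ≤ bE * bF * B3)
    have h5 : bE * bF * B3 * (aE * aF * A / (2 * (bE * bF * B3))) = aE * aF * A / 2 := by
      field_simp
    linarith
  linarith [hd3, hfin2, mul_pos (mul_pos haE haF) hApos]
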